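/- For every nonnegative integer n and every F-step (a,b), the number of restricted bicolored Dyck paths B of semilength n+1 whose letter sequence ends with u dR^{1−b} dB^{a} u dR^{m+1} for some integer m ≥ 0 equals the number of F-paths of length n whose last step is (a,b). Consequently, the number of restricted bicolored Dyck paths of semilength n+1 equals |F_n|. -/

import Mathlib

/-- An `F`-step: `(0,1)` or `(a,b)` with `a ≥ 1` and `b ≤ 1`. -/
def IsFStep (s : ℤ × ℤ) : Prop := s = (0, 1) ∨ (1 ≤ s.1 ∧ s.2 ≤ 1)

/-- An `F`-path: a sequence of `F`-steps whose prefix sums satisfy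
`a_1 + ⋯ + a_i ≤ b_1 + ⋯ + b_i`. -/
def IsFPath (Q : List (ℤ × ℤ)) : Prop :=
  (∀ s ∈ Q, IsFStep s) ∧
  ∀ i : ℕ, ((Q.take i).map Prod.fst).sum ≤ ((Q.take i).map Prod.snd).sum

/-- The set of `F`-paths of length `n`. -/
def FPaths (n : ℕ) : Set (List (ℤ × ℤ)) := {Q | Q.length = n ∧ IsFPath Q}

def fheight (Q : List (ℤ × ℤ)) : ℤ := (Q.map Prod.snd).sum - (Q.map Prod.fst).sum

def fnorth (Q : List (ℤ × ℤ)) : ℕ := Q.countP (fun s => decide (s = ((0 : ℤ), (1 : ℤ))))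

def faone (Q : List (ℤ × ℤ)) : ℕ := Q.countP (fun s => decide (s.1 = 1))

def fbone (Q : List (ℤ × ℤ)) : ℕ := Q.countP (fun s => decide (s.2 = 1))

/-- Steps of a Schröder path. -/
inductive SStep : Type
  | u | d | h
deriving DecidableEq

/-- The width of a Schröder step. -/
def swidth : SStep → ℕ
  | .u => 1
  | .d => 1
  | .h => 2

/-- The height-change of a Schröder step. -/
def shc : SStep → ℤ
  | .u => 1
  | .d => -1
  | .h => 0

/-- A Schröder path of semilength `n`. -/
def IsSchroder (n : ℕ) (P : List SStep) : Prop :=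
  (P.map swidth).sum = 2 * n ∧ (P.map shc).sum = 0 ∧
  ∀ i : ℕ, 0 ≤ ((P.take i).map shc).sum

/-- Schröder paths of semilength `n` without triple descents. -/
def SchP (n : ℕ) : Set (List SStep) :=
  {P | IsSchroder n P ∧ ¬ [SStep.d, SStep.d, SStep.d] <:+: P}

/-- Number of `h` letters preceded by a prefix of total height-change `0`. -/
noncomputable def scomp (P : List SStep) : ℕ :=
  Set.ncard {i : ℕ | P[i]? = some SStep.h ∧ ((P.take i).map shc).sum = 0}

/-- Number of `h` letters plus number of double descents. -/
noncomputable def shdd (P : List SStep) : ℕ :=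
  P.countP (fun s => decide (s = SStep.h)) +
    Set.ncard {i : ℕ | P[i]? = some SStep.d ∧ P[i + 1]? = some SStep.d}

/-- Number of peaks `ud`. -/
noncomputable def speak (P : List SStep) : ℕ :=
  Set.ncard {i : ℕ | P[i]? = some SStep.u ∧ P[i + 1]? = some SStep.d}

/-- Steps of a bicolored Dyck path: up, red down, black down. -/
inductive BStep : Type
  | u | dR | dB
deriving DecidableEq

/-- A restricted bicolored Dyck path of semilength `n`:
`u^{i_1} dR^{j_1} dB^{k_1} ⋯ u^{i_{ℓ-1}} dR^{j_{ℓ-1}} dB^{k_{ℓ-1}} u^{i_ℓ} dR^{j_ℓ}`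
with positive `i`'s and `k`'s, `∑ i = n`, `∑ j + ∑ k = n`, and every prefix having
at least as many `u`'s as down steps. -/
def IsRBD (n : ℕ) (B : List BStep) : Prop :=
  (∃ (blocks : List (ℕ × ℕ × ℕ)) (iL jL : ℕ),
    (∀ t ∈ blocks, 1 ≤ t.1 ∧ 1 ≤ t.2.2) ∧ 1 ≤ iL ∧
    B = (blocks.map (fun t =>
        List.replicate t.1 BStep.u ++ List.replicate t.2.1 BStep.dR ++
          List.replicate t.2.2 BStep.dB)).flatten ++
        (List.replicate iL BStep.u ++ List.replicate jL BStep.dR) ∧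
    (blocks.map (fun t => t.1)).sum + iL = n ∧
    (blocks.map (fun t => t.2.1)).sum + jL + (blocks.map (fun t => t.2.2)).sum = n) ∧
  ∀ i : ℕ, (B.take i).countP (fun s => decide (s ≠ BStep.u)) ≤
    (B.take i).countP (fun s => decide (s = BStep.u))

/-- The length of the final run of red down steps. -/
def blast (B : List BStep) : ℕ := (B.reverse.takeWhile (fun s => decide (s = BStep.dR))).length

/-- The number of double ascents `uu`. -/
noncomputable def bdasc (B : List BStep) : ℕ :=
  Set.ncard {i : ℕ | B[i]? = some BStep.u ∧ B[i + 1]? = some BStep.u}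

/-- The number of occurrences of `u dB u` or `dR dB u`. -/
noncomputable def bbval (B : List BStep) : ℕ :=
  Set.ncard {i : ℕ | (B[i]? = some BStep.u ∨ B[i]? = some BStep.dR) ∧
    B[i + 1]? = some BStep.dB ∧ B[i + 2]? = some BStep.u}

/-- `π : ℕ → ℕ` encodes a permutation of `{1,…,N}`, with value `0` outside
(in particular `π 0 = 0`). -/
def IsPermOn (N : ℕ) (π : ℕ → ℕ) : Prop :=
  Set.BijOn π (Set.Icc 1 N) (Set.Icc 1 N) ∧ ∀ i, i ∉ Set.Icc 1 N → π i = 0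

/-- `π` contains the pattern given by the word `σ`. -/
def ContainsPat (N : ℕ) (π : ℕ → ℕ) (σ : List ℕ) : Prop :=
  ∃ f : Fin σ.length → ℕ, StrictMono f ∧ (∀ t, f t ∈ Set.Icc 1 N) ∧
    ∀ s t : Fin σ.length, π (f s) < π (f t) ↔ σ.get s < σ.get t

/-- Permutations of `{1,…,N}` avoiding the patterns `2341`, `2431` and `3241`. -/
def PermSet (N : ℕ) : Set (ℕ → ℕ) :=
  {π | IsPermOn N π ∧ ¬ContainsPat N π [2, 3, 4, 1] ∧ ¬ContainsPat N π [2, 4, 3, 1] ∧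
    ¬ContainsPat N π [3, 2, 4, 1]}

/-- `block(π)`: the number of `j ∈ {1,…,N}` with `{π(1),…,π(j)} = {1,…,j}`. -/
noncomputable def blockStat (N : ℕ) (π : ℕ → ℕ) : ℕ :=
  Set.ncard {j : ℕ | 1 ≤ j ∧ j ≤ N ∧ π '' Set.Icc 1 j = Set.Icc 1 j}

/-- `asc(π)`: the number of ascents of `π`. -/
noncomputable def ascStat (N : ℕ) (π : ℕ → ℕ) : ℕ :=
  Set.ncard {i : ℕ | 1 ≤ i ∧ i + 1 ≤ N ∧ π i < π (i + 1)}

/-- `crit(π)`: the number of critical entries of `π`. -/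
noncomputable def critStat (N : ℕ) (π : ℕ → ℕ) : ℕ :=
  Set.ncard {i : ℕ | 1 ≤ i ∧ i ≤ N ∧ ∀ j k : ℕ, 1 ≤ j → j < i → i < k → k ≤ N →
    π j < π i → π k < π i → π j < π k}

/-- An inversion sequence: `0 ≤ e_i < i` (1-indexed). -/
def IsInvSeq (e : List ℕ) : Prop := ∀ i : Fin e.length, e.get i < i.val + 1

/-- `e` contains the pattern `101`. -/
def Contains101 (e : List ℕ) : Prop :=
  ∃ i j k : Fin e.length, i < j ∧ j < k ∧ e.get j < e.get i ∧ e.get i = e.get k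

/-- `e` contains the pattern `102`. -/
def Contains102 (e : List ℕ) : Prop :=
  ∃ i j k : Fin e.length, i < j ∧ j < k ∧ e.get j < e.get i ∧ e.get i < e.get k

/-- `e` contains the pattern `021`. -/
def Contains021 (e : List ℕ) : Prop :=
  ∃ i j k : Fin e.length, i < j ∧ j < k ∧ e.get i < e.get k ∧ e.get k < e.get j

/-- Inversion sequences of length `n` avoiding `101` and `102`. -/
def ISet (n : ℕ) : Set (List ℕ) :=
  {e | e.length = n ∧ IsInvSeq e ∧ ¬Contains101 e ∧ ¬Contains102 e}

/-- Inversion sequences of length `n` avoiding `101` and `021`. -/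
def JSet (n : ℕ) : Set (List ℕ) :=
  {e | e.length = n ∧ IsInvSeq e ∧ ¬Contains101 e ∧ ¬Contains021 e}

/-- The largest entry of `e` (`0` for the empty sequence). -/
def maxVal (e : List ℕ) : ℕ := e.foldr max 0

/-- The largest (1-indexed) position of the maximal entry of `e`. -/
def maxid (e : List ℕ) : ℕ := e.length - e.reverse.idxOf (maxVal e)

/-- `e` with the entry at position `maxid e` removed. -/
def ehat (e : List ℕ) : List ℕ := e.eraseIdx (maxid e - 1)

/-- `omi(e)`: the number of `i ∈ {1,…,n}` not occurring as an entry of `e`. -/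
noncomputable def omi (e : List ℕ) : ℕ := Set.ncard {i : ℕ | 1 ≤ i ∧ i ≤ e.length ∧ i ∉ e}

/-- `cons(e)`: the number of `i ∈ {1,…,n-1}` such that both `i-1` and `i` occur in `e`. -/
noncomputable def consStat (e : List ℕ) : ℕ :=
  Set.ncard {i : ℕ | 1 ≤ i ∧ i + 1 ≤ e.length ∧ (i - 1) ∈ e ∧ i ∈ e}

/-- `first(e)`: the length of the initial run of zeros of `e`. -/
def firstStat (e : List ℕ) : ℕ := (e.takeWhile (fun v => decide (v = 0))).length

/-- `single(e)`: the number of positive integers occurring exactly once in `e`. -/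
noncomputable def singleStat (e : List ℕ) : ℕ := Set.ncard {v : ℕ | 1 ≤ v ∧ e.count v = 1}

/-- The binomial coefficient `C(p,q)`, interpreted as `0` unless `0 ≤ q ≤ p`. -/
def C (p q : ℤ) : ℤ := if 0 ≤ q ∧ q ≤ p then (p.toNat.choose q.toNat : ℤ) else 0
open List in
lemma replicate_append_eq {α : Type*} {x : α} : ∀ {p q : ℕ} {l l' : List α},
    l.head? ≠ some x → l'.head? ≠ some x →
    List.replicate p x ++ l = List.replicate q x ++ l' → p = q ∧ l = l'
  | 0, 0, l, l', _, _, h => by simpa using h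
  | 0, q+1, l, l', hl, _, h => by
      simp [List.replicate_succ] at h
      simp [h] at hl
  | p+1, 0, l, l', _, hl', h => by
      simp [List.replicate_succ] at h
      simp [← h] at hl'
  | p+1, q+1, l, l', hl, hl', h => by
      simp only [List.replicate_succ, List.cons_append, List.cons.injEq] at h
      obtain ⟨p', l''⟩ := replicate_append_eq hl hl' h.2
      exact ⟨by omega, l''⟩

open List in
lemma replicate_append_prefix {α : Type*} {x : α} : ∀ {p q : ℕ} {l l' : List α},
    l ≠ [] → l.head? ≠ some x → l'.head? ≠ some x →
    (List.replicate p x ++ l <+: List.replicate q x ++ l') → p = q ∧ l <+: l'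
  | 0, 0, l, l', _, _, _, h => by simpa using h
  | 0, q+1, l, l', hne, hl, _, h => by
      rcases l with _ | ⟨y, t⟩
      · exact absurd rfl hne
      · simp only [List.replicate_succ, List.replicate_zero, List.nil_append,
          List.cons_append, List.cons_prefix_cons] at h
        simp [h.1] at hl
  | p+1, 0, l, l', hne, _, hl', h => by
      rcases l' with _ | ⟨y, t⟩
      · simp only [List.replicate_succ, List.append_nil, List.cons_append] at h
        exact absurd (List.eq_nil_of_prefix_nil h) (by simp)
      · simp only [List.replicate_succ, List.replicate_zero, List.nil_append,
          List.cons_append, List.cons_prefix_cons] at h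
        simp [← h.1] at hl'
  | p+1, q+1, l, l', hne, hl, hl', h => by
      simp only [List.replicate_succ, List.cons_append, List.cons_prefix_cons] at h
      obtain ⟨p', l''⟩ := replicate_append_prefix hne hl hl' h.2
      exact ⟨by omega, l''⟩
/-- Block of `BStep`s corresponding to one `F`-step. -/
def blk (s : ℤ × ℤ) : List BStep :=
  BStep.u :: (List.replicate (1 - s.2).toNat BStep.dR ++ List.replicate s.1.toNat BStep.dB)

/-- Encoding of an `F`-path with final run length `m+1`. -/
def PhiA (Q : List (ℤ × ℤ)) (m : ℕ) : List BStep :=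
  (Q.map blk).flatten ++ BStep.u :: List.replicate (m + 1) BStep.dR

/-- The bijection from `F`-paths to restricted bicolored Dyck paths. -/
def Phi (Q : List (ℤ × ℤ)) : List BStep := PhiA Q (fheight Q).toNat

lemma fstep_facts {s : ℤ × ℤ} (h : IsFStep s) : 0 ≤ s.1 ∧ s.2 ≤ 1 := by
  rcases h with h | h
  · simp [h]
  · exact ⟨le_trans one_pos.le h.1, h.2⟩

lemma fheight_nil : fheight ([] : List (ℤ × ℤ)) = 0 := by simp [fheight]

lemma fheight_cons (s : ℤ × ℤ) (Q : List (ℤ × ℤ)) :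
    fheight (s :: Q) = s.2 - s.1 + fheight Q := by
  simp [fheight]; ring

lemma fheight_append (Q R : List (ℤ × ℤ)) :
    fheight (Q ++ R) = fheight Q + fheight R := by
  simp [fheight]; ring

lemma PhiA_cons (s : ℤ × ℤ) (Q : List (ℤ × ℤ)) (m : ℕ) :
    PhiA (s :: Q) m = blk s ++ PhiA Q m := by
  simp [PhiA, blk]

lemma PhiA_ne_nil (Q : List (ℤ × ℤ)) (m : ℕ) : PhiA Q m ≠ [] := by
  simp [PhiA]

lemma PhiA_head (Q : List (ℤ × ℤ)) (m : ℕ) : (PhiA Q m).head? = some BStep.u := by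
  cases Q with
  | nil => simp [PhiA]
  | cons s Q => simp [PhiA, blk]

lemma head?_replicate_append {α : Type*} (k : ℕ) (x : α) (L : List α) :
    (List.replicate k x ++ L).head? = if k = 0 then L.head? else some x := by
  cases k <;> simp [List.replicate_succ]

/-- height change of a single `BStep`. -/
def hB : BStep → ℤ
  | BStep.u => 1
  | _ => -1

/-- total height of a list of `BStep`s. -/
def htB (L : List BStep) : ℤ := (L.map hB).sum

lemma htB_nil : htB [] = 0 := rfl

lemma htB_cons (x : BStep) (L : List BStep) : htB (x :: L) = hB x + htB L := by
  simp [htB]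

lemma htB_count (L : List BStep) :
    htB L = (L.countP (fun s => decide (s = BStep.u)) : ℤ)
      - (L.countP (fun s => decide (s ≠ BStep.u)) : ℤ) := by
  induction L with
  | nil => simp [htB]
  | cons x L ih =>
      cases x <;> simp [htB_cons, ih, List.countP_cons, hB] <;> ring
lemma ht_prefix_down {x : BStep} (hx : hB x = -1) :
    ∀ (p : ℕ) (e : ℤ) (L : List BStep),
    (∀ i, 0 ≤ e - p + htB (L.take i)) → (p : ℤ) ≤ e →
    ∀ i, 0 ≤ e + htB ((List.replicate p x ++ L).take i)
  | 0, e, L, hL, hpe, i => by simpa using hL i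
  | p+1, e, L, hL, hpe, 0 => by
      simpa [htB] using le_trans (by positivity) hpe
  | p+1, e, L, hL, hpe, i+1 => by
      rw [List.replicate_succ, List.cons_append, List.take_succ_cons, htB_cons, hx]
      have := ht_prefix_down hx p (e - 1) L (fun i => by have := hL i; push_cast at *; omega)
        (by push_cast at *; omega) i
      omega

lemma ht_prefix_cons_u (e : ℤ) (L : List BStep)
    (hL : ∀ i, 0 ≤ e + 1 + htB (L.take i)) (he : 0 ≤ e) :
    ∀ i, 0 ≤ e + htB ((BStep.u :: L).take i)
  | 0 => by simpa [htB]
  | i+1 => by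
      rw [List.take_succ_cons, htB_cons]
      have := hL i
      simp [hB] at *
      omega

lemma PhiA_prefix_pos : ∀ (Q : List (ℤ × ℤ)) (c : ℤ) (m : ℕ),
    (∀ s ∈ Q, IsFStep s) → 0 ≤ c →
    (∀ i, ((Q.take i).map Prod.fst).sum ≤ ((Q.take i).map Prod.snd).sum + c) →
    (m : ℤ) ≤ c + fheight Q →
    ∀ i, 0 ≤ c + htB ((PhiA Q m).take i)
  | [], c, m, _, hc, _, hm, i => by
      rw [fheight_nil, add_zero] at hm
      have : PhiA [] m = BStep.u :: (List.replicate (m+1) BStep.dR ++ []) := by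
        simp [PhiA]
      rw [this]
      refine ht_prefix_cons_u c _ ?_ hc i
      refine ht_prefix_down (by rfl) (m+1) (c+1) [] (fun j => by simp [htB]; omega)
        (by omega)
  | s :: Q, c, m, hF, hc, hpre, hm, i => by
      have hs : IsFStep s := hF s (by simp)
      obtain ⟨ha, hb⟩ := fstep_facts hs
      have h1 : s.1 ≤ s.2 + c := by simpa using hpre 1
      have hrw : PhiA (s :: Q) m = BStep.u :: (List.replicate (1 - s.2).toNat BStep.dR ++
          (List.replicate s.1.toNat BStep.dB ++ PhiA Q m)) := by
        simp [PhiA_cons, blk]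
      rw [hrw]
      refine ht_prefix_cons_u c _ ?_ hc i
      refine ht_prefix_down (by rfl) _ (c+1) _ ?_ (by omega)
      refine ht_prefix_down (by rfl) _ _ _ ?_ (by push_cast; omega)
      intro j
      have key : ∀ j, 0 ≤ (c + s.2 - s.1) + htB ((PhiA Q m).take j) := by
        refine PhiA_prefix_pos Q (c + s.2 - s.1) m (fun t ht => hF t (by simp [ht]))
          (by omega) ?_ ?_
        · intro j
          have := hpre (j+1)
          simp only [List.take_succ_cons, List.map_cons, List.sum_cons] at this
          omega
        · rw [fheight_cons] at hm; omega
      have := key j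
      push_cast
      omega

lemma countU_blk (s : ℤ × ℤ) :
    (blk s).countP (fun t => decide (t = BStep.u)) = 1 := by
  simp [blk, List.countP_cons, List.countP_append, List.countP_replicate]

lemma countD_blk (s : ℤ × ℤ) :
    (blk s).countP (fun t => decide (t ≠ BStep.u)) = (1 - s.2).toNat + s.1.toNat := by
  simp [blk, List.countP_cons, List.countP_append, List.countP_replicate]

lemma countU_flatten (Q : List (ℤ × ℤ)) :
    ((Q.map blk).flatten).countP (fun t => decide (t = BStep.u)) = Q.length := by
  induction Q with
  | nil => simp
  | cons s Q ih =>
      rw [List.map_cons, List.flatten_cons, List.countP_append, ih, countU_blk,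
        List.length_cons]
      omega

lemma countD_flatten (Q : List (ℤ × ℤ)) :
    ((Q.map blk).flatten).countP (fun t => decide (t ≠ BStep.u))
      = (Q.map (fun s => (1 - s.2).toNat + s.1.toNat)).sum := by
  induction Q with
  | nil => simp
  | cons s Q ih =>
      rw [List.map_cons, List.flatten_cons, List.countP_append, ih, countD_blk,
        List.map_cons, List.sum_cons]

lemma sumD_eq (Q : List (ℤ × ℤ)) (hQ : ∀ s ∈ Q, IsFStep s) :
    ((Q.map (fun s => ((1 - s.2).toNat + s.1.toNat : ℕ))).sum : ℤ) = Q.length - fheight Q := by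
  induction Q with
  | nil => simp [fheight_nil]
  | cons s Q ih =>
      obtain ⟨ha, hb⟩ := fstep_facts (hQ s (by simp))
      have ih' := ih (fun t ht => hQ t (by simp [ht]))
      have e1 : ((1 - s.2).toNat : ℤ) = 1 - s.2 := Int.toNat_of_nonneg (by omega)
      have e2 : ((s.1.toNat : ℤ)) = s.1 := Int.toNat_of_nonneg ha
      rw [List.map_cons, List.sum_cons, fheight_cons, List.length_cons]
      push_cast
      push_cast at ih'
      rw [e1, e2, ih']
      ring
lemma fstep_eq_of {s₁ s₂ : ℤ × ℤ} (h₁ : IsFStep s₁) (h₂ : IsFStep s₂)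
    (hj : (1 - s₁.2).toNat = (1 - s₂.2).toNat) (hk : s₁.1.toNat = s₂.1.toNat) :
    s₁ = s₂ := by
  obtain ⟨a1, b1⟩ := fstep_facts h₁
  obtain ⟨a2, b2⟩ := fstep_facts h₂
  have : s₁.1 = s₂.1 := by omega
  have : s₁.2 = s₂.2 := by omega
  exact Prod.ext ‹s₁.1 = s₂.1› ‹s₁.2 = s₂.2›

lemma dB_head_ne_dR (k : ℕ) (L : List BStep) (hL : L.head? = some BStep.u) :
    (List.replicate k BStep.dB ++ L).head? ≠ some BStep.dR := by
  rw [head?_replicate_append]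
  split <;> simp [hL]

lemma PhiA_inj : ∀ (Q₁ Q₂ : List (ℤ × ℤ)) (m₁ m₂ : ℕ),
    (∀ s ∈ Q₁, IsFStep s) → (∀ s ∈ Q₂, IsFStep s) →
    PhiA Q₁ m₁ = PhiA Q₂ m₂ → Q₁ = Q₂ ∧ m₁ = m₂
  | [], [], m₁, m₂, _, _, h => by
      simp only [PhiA, List.map_nil, List.flatten_nil, List.nil_append,
        List.cons.injEq] at h
      have := congrArg List.length h.2
      simp at this
      exact ⟨rfl, by omega⟩
  | [], s :: Q₂, m₁, m₂, _, hF₂, h => by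
      rw [PhiA_cons] at h
      simp only [PhiA, List.map_nil, List.flatten_nil, List.nil_append, blk,
        List.cons_append, List.cons.injEq] at h
      have h' : List.replicate (m₁+1) BStep.dR ++ ([] : List BStep)
          = List.replicate (1 - s.2).toNat BStep.dR ++
            (List.replicate s.1.toNat BStep.dB ++ PhiA Q₂ m₂) := by
        simpa [PhiA] using h.2
      obtain ⟨-, habs⟩ := replicate_append_eq (x := BStep.dR) (by simp)
        (dB_head_ne_dR _ _ (PhiA_head _ _)) h'
      exact absurd habs.symm (by simp [PhiA_ne_nil])
  | s :: Q₁, [], m₁, m₂, hF₁, _, h => by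
      rw [PhiA_cons] at h
      simp only [PhiA, List.map_nil, List.flatten_nil, List.nil_append, blk,
        List.cons_append, List.cons.injEq] at h
      have h' : List.replicate (1 - s.2).toNat BStep.dR ++
            (List.replicate s.1.toNat BStep.dB ++ PhiA Q₁ m₁)
          = List.replicate (m₂+1) BStep.dR ++ ([] : List BStep) := by
        simpa [PhiA] using h.2
      obtain ⟨-, habs⟩ := replicate_append_eq (x := BStep.dR)
        (dB_head_ne_dR _ _ (PhiA_head _ _)) (by simp) h'
      exact absurd habs (by simp [PhiA_ne_nil])
  | s₁ :: Q₁, s₂ :: Q₂, m₁, m₂, hF₁, hF₂, h => by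
      rw [PhiA_cons, PhiA_cons] at h
      simp only [blk, List.cons_append, List.cons.injEq, List.append_assoc] at h
      obtain ⟨hj, h2⟩ := replicate_append_eq (x := BStep.dR)
        (dB_head_ne_dR _ _ (PhiA_head _ _)) (dB_head_ne_dR _ _ (PhiA_head _ _)) h.2
      obtain ⟨hk, h3⟩ := replicate_append_eq (x := BStep.dB)
        (by rw [PhiA_head]; simp) (by rw [PhiA_head]; simp) h2
      obtain ⟨hQ, hm⟩ := PhiA_inj Q₁ Q₂ m₁ m₂ (fun t ht => hF₁ t (by simp [ht]))
        (fun t ht => hF₂ t (by simp [ht])) h3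
      exact ⟨by rw [hQ, fstep_eq_of (hF₁ s₁ (by simp)) (hF₂ s₂ (by simp)) hj hk],
        hm⟩
/-- The block decomposition of an `F`-path. -/
def toB : List (ℤ × ℤ) → List (ℕ × ℕ × ℕ) × ℕ
  | [] => ([], 1)
  | s :: Q =>
    let r := toB Q
    if s.1 = 0 then
      match r.1 with
      | [] => ([], r.2 + 1)
      | t :: bs => ((t.1 + 1, t.2.1, t.2.2) :: bs, r.2)
    else ((1, (1 - s.2).toNat, s.1.toNat) :: r.1, r.2)

/-- the block-word map from the `IsRBD` definition. -/
def fB (t : ℕ × ℕ × ℕ) : List BStep :=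
  List.replicate t.1 BStep.u ++ List.replicate t.2.1 BStep.dR ++
    List.replicate t.2.2 BStep.dB

lemma toB_spec : ∀ (Q : List (ℤ × ℤ)), (∀ s ∈ Q, IsFStep s) →
    ((((toB Q).1.map fB).flatten ++ List.replicate (toB Q).2 BStep.u
        = (Q.map blk).flatten ++ [BStep.u])
    ∧ (∀ t ∈ (toB Q).1, 1 ≤ t.1 ∧ 1 ≤ t.2.2)
    ∧ 1 ≤ (toB Q).2
    ∧ ((toB Q).1.map (fun t => t.1)).sum + (toB Q).2 = Q.length + 1
    ∧ ((toB Q).1.map (fun t => t.2.1)).sum + ((toB Q).1.map (fun t => t.2.2)).sum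
        = (Q.map (fun s => ((1 - s.2).toNat + s.1.toNat : ℕ))).sum)
  | [], _ => by simp [toB]
  | s :: Q, hF => by
      obtain ⟨ih1, ih2, ih3, ih4, ih5⟩ := toB_spec Q (fun t ht => hF t (by simp [ht]))
      have hs := hF s (by simp)
      by_cases h0 : s.1 = 0
      · have hs1 : s = (0, 1) := by
          rcases hs with h | h
          · exact h
          · omega
        have hblk : blk s = [BStep.u] := by
          simp [blk, hs1]
        cases hb : (toB Q).1 with
        | nil =>
            have ht : toB (s :: Q) = ([], (toB Q).2 + 1) := by
              simp [toB, h0, hb]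
            rw [hb] at ih1 ih2 ih4 ih5
            simp only [List.map_nil, List.flatten_nil, List.nil_append,
              List.sum_nil] at ih1 ih2 ih4 ih5
            refine ⟨?_, by simp [ht], by simp [ht], by simp [ht]; omega, ?_⟩
            · rw [ht]
              simp only [List.map_nil, List.flatten_nil, List.nil_append,
                List.map_cons, List.flatten_cons, hblk]
              rw [List.replicate_succ, ih1]
              simp
            · rw [ht]
              simp [hs1]
              simpa [hs1] using ih5
        | cons t bs =>
            have ht : toB (s :: Q) = ((t.1 + 1, t.2.1, t.2.2) :: bs, (toB Q).2) := by
              simp [toB, h0, hb]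
            rw [hb] at ih1 ih2 ih4 ih5
            have hfB : fB (t.1 + 1, t.2.1, t.2.2) = BStep.u :: fB t := by
              simp [fB, List.replicate_succ]
            refine ⟨?_, ?_, by simp [ht, ih3], ?_, ?_⟩
            · rw [ht]
              simp only [List.map_cons, List.flatten_cons, hfB, hblk,
                List.cons_append, List.append_assoc] at *
              rw [ih1]
              simp
            · rw [ht]
              intro t' ht'
              simp only [List.mem_cons] at ht'
              rcases ht' with h | h
              · subst h
                have := ih2 t (by simp)
                exact ⟨by omega, this.2⟩
              · exact ih2 t' (by simp [h])
            · rw [ht]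
              simp at ih4 ⊢
              omega
            · rw [ht]
              simp [hs1] at ih5 ⊢
              omega
      · have h1 : 1 ≤ s.1 := by
          rcases hs with h | h
          · simp [h] at h0
          · exact h.1
        have ht : toB (s :: Q) = ((1, (1 - s.2).toNat, s.1.toNat) :: (toB Q).1,
            (toB Q).2) := by
          simp [toB, h0]
        have hfB : fB (1, (1 - s.2).toNat, s.1.toNat) = blk s := by
          simp [fB, blk]
        refine ⟨?_, ?_, by simp [ht, ih3], ?_, ?_⟩
        · rw [ht]
          simp only [List.map_cons, List.flatten_cons, hfB, List.append_assoc]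
          rw [ih1]
        · rw [ht]
          intro t' ht'
          simp only [List.mem_cons] at ht'
          rcases ht' with h | h
          · subst h
            exact ⟨le_refl 1, by simp; omega⟩
          · exact ih2 t' (by simp [h])
        · rw [ht]
          simp at ih4 ⊢
          omega
        · rw [ht]
          simp at ih5 ⊢
          omega
lemma Phi_mem {n : ℕ} {Q : List (ℤ × ℤ)} (hQ : Q ∈ FPaths n) : IsRBD (n + 1) (Phi Q) := by
  obtain ⟨hlen, hF, hpre⟩ := hQ
  have hh : 0 ≤ fheight Q := by
    have := hpre Q.length
    rw [List.take_length] at this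
    exact sub_nonneg.2 this
  have hts : ((fheight Q).toNat : ℤ) = fheight Q := Int.toNat_of_nonneg hh
  obtain ⟨h1, h2, h3, h4, h5⟩ := toB_spec Q hF
  constructor
  · refine ⟨(toB Q).1, (toB Q).2, (fheight Q).toNat + 1, h2, h3, ?_, by omega, ?_⟩
    · show Phi Q = ((toB Q).1.map fB).flatten ++
        (List.replicate (toB Q).2 BStep.u ++
          List.replicate ((fheight Q).toNat + 1) BStep.dR)
      rw [Phi, PhiA, ← List.append_assoc, h1, List.append_assoc]
      simp
    · have hcast : ((Q.map (fun s => ((1 - s.2).toNat + s.1.toNat : ℕ))).sum : ℤ)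
        = Q.length - fheight Q := sumD_eq Q hF
      omega
  · intro i
    have pos := PhiA_prefix_pos Q 0 (fheight Q).toNat hF le_rfl
      (fun j => by simpa using hpre j) (by omega) i
    rw [htB_count] at pos
    show ((Phi Q).take i).countP _ ≤ ((Phi Q).take i).countP _
    simp only [Phi]
    omega
lemma countU_fB_flatten (bs : List (ℕ × ℕ × ℕ)) :
    ((bs.map fB).flatten).countP (fun t => decide (t = BStep.u))
      = (bs.map (fun t => t.1)).sum := by
  induction bs with
  | nil => simp
  | cons t bs ih =>
      rw [List.map_cons, List.flatten_cons, List.countP_append, ih]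
      simp [fB, List.countP_append, List.countP_replicate]

lemma countD_fB_flatten (bs : List (ℕ × ℕ × ℕ)) :
    ((bs.map fB).flatten).countP (fun t => decide (t ≠ BStep.u))
      = (bs.map (fun t => t.2.1)).sum + (bs.map (fun t => t.2.2)).sum := by
  induction bs with
  | nil => simp
  | cons t bs ih =>
      rw [List.map_cons, List.flatten_cons, List.countP_append, ih]
      simp [fB, List.countP_append, List.countP_replicate]
      omega

/-- the step list associated to one block. -/
def gQ (t : ℕ × ℕ × ℕ) : List (ℤ × ℤ) :=
  List.replicate (t.1 - 1) ((0 : ℤ), (1 : ℤ)) ++ [((t.2.2 : ℤ), 1 - (t.2.1 : ℤ))]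

lemma blk_zero_one : blk ((0 : ℤ), (1 : ℤ)) = [BStep.u] := by simp [blk]

lemma blk_kj (j k : ℕ) : blk ((k : ℤ), 1 - (j : ℤ))
    = BStep.u :: (List.replicate j BStep.dR ++ List.replicate k BStep.dB) := by
  have e1 : (1 - (1 - (j : ℤ))).toNat = j := by omega
  have e2 : ((k : ℤ)).toNat = k := by omega
  simp [blk, e1, e2]

lemma flatten_blk_rep (c : ℕ) :
    (((List.replicate c ((0 : ℤ), (1 : ℤ)))).map blk).flatten
      = List.replicate c BStep.u := by
  induction c with
  | zero => simp
  | succ c ih => simp [List.replicate_succ, blk_zero_one, ih]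

lemma flatten_blk_gQ (t : ℕ × ℕ × ℕ) (ht : 1 ≤ t.1) :
    ((gQ t).map blk).flatten = fB t := by
  obtain ⟨i, hi⟩ : ∃ i, t.1 = i + 1 := ⟨t.1 - 1, by omega⟩
  rw [gQ, fB, hi, Nat.add_sub_cancel, List.map_append, List.flatten_append,
    flatten_blk_rep]
  simp [blk_kj, List.replicate_succ', List.append_assoc]

lemma flatten_blk_flatMap (bs : List (ℕ × ℕ × ℕ)) (hv : ∀ t ∈ bs, 1 ≤ t.1) :
    (((bs.flatMap gQ)).map blk).flatten = (bs.map fB).flatten := by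
  induction bs with
  | nil => simp
  | cons t bs ih =>
      rw [List.flatMap_cons, List.map_append, List.flatten_append,
        flatten_blk_gQ t (hv t (by simp)), List.map_cons, List.flatten_cons,
        ih (fun t' ht' => hv t' (by simp [ht']))]

lemma fheight_replicate01 (c : ℕ) :
    fheight (List.replicate c ((0 : ℤ), (1 : ℤ))) = c := by
  induction c with
  | zero => simp [fheight_nil]
  | succ c ih => rw [List.replicate_succ, fheight_cons, ih]; push_cast; ring

lemma fheight_gQ (t : ℕ × ℕ × ℕ) (ht : 1 ≤ t.1) :
    fheight (gQ t) = (t.1 : ℤ) - t.2.1 - t.2.2 := by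
  rw [gQ, fheight_append, fheight_replicate01, fheight_cons, fheight_nil]
  simp
  omega

lemma fheight_flatMap (bs : List (ℕ × ℕ × ℕ)) (hv : ∀ t ∈ bs, 1 ≤ t.1) :
    fheight (bs.flatMap gQ) = ((((bs.map (fun t => t.1)).sum : ℕ)) : ℤ)
      - ((((bs.map (fun t => t.2.1)).sum : ℕ)) : ℤ)
      - ((((bs.map (fun t => t.2.2)).sum : ℕ)) : ℤ) := by
  induction bs with
  | nil => simp [fheight_nil]
  | cons t bs ih =>
      rw [List.flatMap_cons, fheight_append, fheight_gQ t (hv t (by simp)),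
        ih (fun t' ht' => hv t' (by simp [ht']))]
      simp only [List.map_cons, List.sum_cons]
      push_cast
      ring

lemma length_gQ (t : ℕ × ℕ × ℕ) (ht : 1 ≤ t.1) : (gQ t).length = t.1 := by
  simp [gQ]
  omega

lemma length_flatMap (bs : List (ℕ × ℕ × ℕ)) (hv : ∀ t ∈ bs, 1 ≤ t.1) :
    (bs.flatMap gQ).length = (bs.map (fun t => t.1)).sum := by
  induction bs with
  | nil => simp
  | cons t bs ih =>
      rw [List.flatMap_cons, List.length_append, length_gQ t (hv t (by simp)),
        ih (fun t' ht' => hv t' (by simp [ht']))]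
      simp
lemma RBD_surj {n : ℕ} {B : List BStep} (hB : IsRBD (n + 1) B) :
    ∃ Q, Q ∈ FPaths n ∧ Phi Q = B := by
  obtain ⟨⟨blocks, iL, jL, hval, hiL, hBeq, hsum1, hsum2⟩, hpre⟩ := hB
  have hfB : (fun t : ℕ × ℕ × ℕ => List.replicate t.1 BStep.u ++
      List.replicate t.2.1 BStep.dR ++ List.replicate t.2.2 BStep.dB) = fB := rfl
  rw [hfB] at hBeq
  have hv1 : ∀ t ∈ blocks, 1 ≤ t.1 := fun t ht => (hval t ht).1
  have hjL : 1 ≤ jL := by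
    by_contra hc
    have hjL0 : jL = 0 := by omega
    subst hjL0
    obtain ⟨i0, hi0⟩ : ∃ i0, iL = i0 + 1 := ⟨iL - 1, by omega⟩
    have hC : B = ((blocks.map fB).flatten ++ List.replicate i0 BStep.u)
        ++ [BStep.u] := by
      rw [hBeq, hi0]
      simp [List.replicate_succ', List.append_assoc]
    have htake : B.take ((blocks.map fB).flatten ++ List.replicate i0 BStep.u).length
        = (blocks.map fB).flatten ++ List.replicate i0 BStep.u := by
      rw [hC]; exact List.take_left
    have h2 := hpre ((blocks.map fB).flatten ++ List.replicate i0 BStep.u).length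
    rw [htake] at h2
    rw [List.countP_append, List.countP_append, countD_fB_flatten, countU_fB_flatten,
      List.countP_replicate, List.countP_replicate] at h2
    simp at h2
    omega
  set Q := blocks.flatMap gQ ++ List.replicate (iL - 1) ((0:ℤ),(1:ℤ)) with hQdef
  have hflat : (Q.map blk).flatten
      = (blocks.map fB).flatten ++ List.replicate (iL - 1) BStep.u := by
    rw [hQdef, List.map_append, List.flatten_append, flatten_blk_flatMap blocks hv1,
      flatten_blk_rep]
  have hfh : fheight Q = (jL : ℤ) - 1 := by
    rw [hQdef, fheight_append, fheight_flatMap blocks hv1, fheight_replicate01]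
    omega
  have hlenQ : Q.length = n := by
    rw [hQdef, List.length_append, length_flatMap blocks hv1, List.length_replicate]
    omega
  have hFQ : ∀ s ∈ Q, IsFStep s := by
    intro s hs
    rw [hQdef] at hs
    rcases List.mem_append.1 hs with h | h
    · rcases List.mem_flatMap.1 h with ⟨t, htb, hst⟩
      rcases List.mem_append.1 hst with h' | h'
      · rw [List.eq_of_mem_replicate h']
        exact Or.inl rfl
      · simp only [List.mem_singleton] at h'
        subst h'
        have hk2 := (hval t htb).2
        refine Or.inr ⟨?_, ?_⟩
        · show 1 ≤ (t.2.2 : ℤ)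
          exact_mod_cast hk2
        · show (1 : ℤ) - (t.2.1 : ℤ) ≤ 1
          omega
    · rw [List.eq_of_mem_replicate h]
      exact Or.inl rfl
  have hPhi : Phi Q = B := by
    rw [Phi, PhiA, hflat, hBeq]
    have hje : (fheight Q).toNat + 1 = jL := by omega
    rw [hje]
    obtain ⟨i0, hi0⟩ : ∃ i0, iL = i0 + 1 := ⟨iL - 1, by omega⟩
    rw [hi0]
    simp [List.replicate_succ', List.append_assoc]
  refine ⟨Q, ⟨hlenQ, hFQ, ?_⟩, hPhi⟩
  intro i
  have hpref : ((Q.take i).map blk).flatten <+: B := by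
    rw [← hPhi, Phi, PhiA]
    refine List.IsPrefix.trans ?_ (List.prefix_append _ _)
    have : (Q.map blk).flatten
        = ((Q.take i).map blk).flatten ++ (((Q.drop i)).map blk).flatten := by
      rw [← List.flatten_append, ← List.map_append, List.take_append_drop]
    rw [this]
    exact List.prefix_append _ _
  have htk : B.take (((Q.take i).map blk).flatten).length
      = ((Q.take i).map blk).flatten := (List.prefix_iff_eq_take.1 hpref).symm
  have h2 := hpre (((Q.take i).map blk).flatten).length
  rw [htk, countU_flatten, countD_flatten] at h2
  have h3 := sumD_eq (Q.take i) (fun t ht => hFQ t (List.mem_of_mem_take ht))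
  have hfd : fheight (Q.take i)
      = ((Q.take i).map Prod.snd).sum - ((Q.take i).map Prod.fst).sum := rfl
  have hlt : (Q.take i).length ≤ Q.length := by simp
  omega
/-- the suffix word `u dR^{1-b} dB^a u dR^{m+1}`. -/
def Sfx (a b : ℤ) (m : ℕ) : List BStep :=
  [BStep.u] ++ List.replicate (1 - b).toNat BStep.dR ++
    List.replicate a.toNat BStep.dB ++ [BStep.u] ++ List.replicate (m + 1) BStep.dR

lemma Phi_suffix_last (Q' : List (ℤ × ℤ)) (a b : ℤ) :
    ∃ m, Sfx a b m <:+ Phi (Q' ++ [(a, b)]) := by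
  refine ⟨(fheight (Q' ++ [(a, b)])).toNat, ?_⟩
  rw [Phi, PhiA, List.map_append, List.flatten_append]
  have hkey : (([( (a : ℤ), (b : ℤ))].map blk).flatten) ++
      (BStep.u :: List.replicate ((fheight (Q' ++ [(a, b)])).toNat + 1) BStep.dR)
      = Sfx a b (fheight (Q' ++ [(a, b)])).toNat := by
    simp [Sfx, blk, List.append_assoc]
  rw [List.append_assoc, hkey]
  exact List.suffix_append _ _

lemma head?_ne_dB (j : ℕ) (L : List BStep) (hL : L.head? = some BStep.u) :
    (List.replicate j BStep.dR ++ L).head? ≠ some BStep.dB := by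
  rw [head?_replicate_append]
  split <;> simp [hL]

lemma head?_ne_dR' (j : ℕ) (L : List BStep) (hL : L.head? = some BStep.u) :
    (List.replicate j BStep.dB ++ L).head? ≠ some BStep.dR := by
  rw [head?_replicate_append]
  split <;> simp [hL]

lemma suffix_unique {Q : List (ℤ × ℤ)} (hF : ∀ s ∈ Q, IsFStep s) {a b : ℤ}
    (hab : IsFStep (a, b)) {m : ℕ} (hs : Sfx a b m <:+ Phi Q) :
    Q.getLast? = some (a, b) := by
  rcases List.eq_nil_or_concat Q with rfl | ⟨Q', s₀, rfl⟩
  · have hl := hs.length_le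
    simp [Sfx, Phi, PhiA, fheight_nil] at hl
    omega
  · rw [List.concat_eq_append] at hs hF ⊢
    have hs₀ : IsFStep s₀ := hF s₀ (by simp)
    set h := (fheight (Q' ++ [s₀])).toNat with hh
    have hrevB : (Phi (Q' ++ [s₀])).reverse
        = List.replicate (h + 1) BStep.dR ++ (BStep.u ::
          (List.replicate s₀.1.toNat BStep.dB ++ (List.replicate (1 - s₀.2).toNat BStep.dR
            ++ (BStep.u :: ((Q'.map blk).flatten).reverse)))) := by
      rw [Phi, PhiA, List.map_append, List.flatten_append]
      simp [blk, List.reverse_append, List.append_assoc]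
      exact hh.symm
    have hrevS : (Sfx a b m).reverse
        = List.replicate (m + 1) BStep.dR ++ (BStep.u ::
          (List.replicate a.toNat BStep.dB ++ (List.replicate (1 - b).toNat BStep.dR
            ++ [BStep.u]))) := by
      simp [Sfx, List.reverse_append, List.append_assoc]
    have hpre : (Sfx a b m).reverse <+: (Phi (Q' ++ [s₀])).reverse :=
      List.reverse_prefix.2 hs
    rw [hrevS, hrevB] at hpre
    obtain ⟨hm, hpre2⟩ := replicate_append_prefix (by simp) (by simp) (by simp) hpre
    rw [List.cons_prefix_cons] at hpre2
    obtain ⟨hk, hpre3⟩ := replicate_append_prefix (by simp)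
      (head?_ne_dB _ _ (by simp)) (head?_ne_dB _ _ (by simp)) hpre2.2
    obtain ⟨hj, -⟩ := replicate_append_prefix (by simp) (by simp) (by simp) hpre3
    rw [List.getLast?_concat]
    rw [fstep_eq_of hab hs₀ hj hk]
/-- Theorem 2.6: restricted bicolored Dyck paths of semilength `n+1` ending with
`u dR^{1-b} dB^a u dR^{m+1}` are equinumerous with `F`-paths of length `n` with last
step `(a,b)`; consequently `|B_{n+1}| = |F_n|`. -/
theorem rbd_Fpath_counts (n : ℕ) (a b : ℤ) (hab : IsFStep (a, b)) :
    ({B : List BStep | IsRBD (n + 1) B ∧ ∃ m : ℕ,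
        ([BStep.u] ++ List.replicate (1 - b).toNat BStep.dR ++
          List.replicate a.toNat BStep.dB ++ [BStep.u] ++
          List.replicate (m + 1) BStep.dR) <:+ B}).ncard =
      ({Q ∈ FPaths n | Q.getLast? = some (a, b)}).ncard ∧
    ({B : List BStep | IsRBD (n + 1) B}).ncard = (FPaths n).ncard := by
  have hinj : Set.InjOn Phi (FPaths n) := by
    intro Q₁ h₁ Q₂ h₂ he
    exact (PhiA_inj Q₁ Q₂ _ _ h₁.2.1 h₂.2.1 he).1
  have himg2 : Phi '' FPaths n = {B | IsRBD (n + 1) B} := by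
    ext B
    constructor
    · rintro ⟨Q, hQ, rfl⟩
      exact Phi_mem hQ
    · intro hB
      obtain ⟨Q, hQ, hPhi⟩ := RBD_surj hB
      exact ⟨Q, hQ, hPhi⟩
  have himg1 : Phi '' {Q ∈ FPaths n | Q.getLast? = some (a, b)}
      = {B | IsRBD (n + 1) B ∧ ∃ m, Sfx a b m <:+ B} := by
    ext B
    constructor
    · rintro ⟨Q, ⟨hQ, hlast⟩, rfl⟩
      refine ⟨Phi_mem hQ, ?_⟩
      obtain ⟨Q', rfl⟩ := List.getLast?_eq_some_iff.1 hlast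
      exact Phi_suffix_last Q' a b
    · rintro ⟨hB, m, hsfx⟩
      obtain ⟨Q, hQ, rfl⟩ := RBD_surj hB
      exact ⟨Q, ⟨hQ, suffix_unique hQ.2.1 hab hsfx⟩, rfl⟩
  have hset : {B : List BStep | IsRBD (n + 1) B ∧ ∃ m : ℕ,
        ([BStep.u] ++ List.replicate (1 - b).toNat BStep.dR ++
          List.replicate a.toNat BStep.dB ++ [BStep.u] ++
          List.replicate (m + 1) BStep.dR) <:+ B}
      = {B | IsRBD (n + 1) B ∧ ∃ m, Sfx a b m <:+ B} := rfl
  constructor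
  · rw [hset, ← himg1]
    exact Set.ncard_image_of_injOn (hinj.mono (fun Q hQ => hQ.1))
  · rw [← himg2]
    exact Set.ncard_image_of_injOn hinj
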